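/- Let N, G, l be natural numbers, let α, β, γ, δ be nonnegative reals, let K^m ∈ Matrix (Fin N) (Fin G) ℝ and K^c ∈ Matrix (Fin N) (Fin N) ℝ have all entries nonnegative, let Y^o ∈ Matrix (Fin N) (Fin l) ℝ, Y^g ∈ Matrix (Fin G) (Fin l) ℝ, and define P(F^o, F^g) = (α/2) ∑_{i,j} K^m_{ij} ‖F^o_{i·} − F^g_{j·}‖² + (β/2) ∑_{i,j} K^c_{ij} ‖F^o_{i·} − F^o_{j·}‖² + γ ∑_i ‖F^o_{i·} − Y^o_{i·}‖² + δ ∑_j ‖F^g_{j·} − Y^g_{j·}‖². Fix F^o, and assume that for every j < G we have α ∑_i K^m_{ij} + 2δ > 0. Then the function F^g ↦ P(F^o, F^g) is strictly convex on Matrix (Fin G) (Fin l) ℝ. -/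

import Mathlib

open scoped BigOperators

noncomputable def esqnorm {l : ℕ} (v : Fin l → ℝ) : ℝ :=
  ‖(WithLp.equiv 2 (Fin l → ℝ)).symm v‖ ^ 2

lemma esqnorm_eq {l : ℕ} (v : Fin l → ℝ) : esqnorm v = ∑ k, v k ^ 2 := by
  rw [esqnorm, EuclideanSpace.norm_eq, Real.sq_sqrt (by positivity)]
  simp [sq_abs]

lemma esqnorm_nonneg {l : ℕ} (v : Fin l → ℝ) : 0 ≤ esqnorm v := by
  rw [esqnorm_eq]; positivity

lemma esqnorm_pos {l : ℕ} {v : Fin l → ℝ} (hv : v ≠ 0) : 0 < esqnorm v := by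
  have h : (WithLp.equiv 2 (Fin l → ℝ)).symm v ≠ 0 := by simpa using hv
  exact pow_pos (norm_pos_iff.mpr h) 2

lemma esqnorm_key {l : ℕ} (a b : ℝ) (hab : a + b = 1) (c u v : Fin l → ℝ) :
    esqnorm (c - (a • u + b • v)) =
      a * esqnorm (c - u) + b * esqnorm (c - v) - a * b * esqnorm (u - v) := by
  have hb : b = 1 - a := by linarith
  subst hb
  simp only [esqnorm_eq, Finset.mul_sum, ← Finset.sum_sub_distrib, ← Finset.sum_add_distrib]
  refine Finset.sum_congr rfl fun k _ => ?_
  simp only [Pi.sub_apply, Pi.add_apply, Pi.smul_apply, smul_eq_mul]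
  ring

lemma esqnorm_key2 {l : ℕ} (a b : ℝ) (hab : a + b = 1) (c u v : Fin l → ℝ) :
    esqnorm ((a • u + b • v) - c) =
      a * esqnorm (u - c) + b * esqnorm (v - c) - a * b * esqnorm (u - v) := by
  have hb : b = 1 - a := by linarith
  subst hb
  simp only [esqnorm_eq, Finset.mul_sum, ← Finset.sum_sub_distrib, ← Finset.sum_add_distrib]
  refine Finset.sum_congr rfl fun k _ => ?_
  simp only [Pi.sub_apply, Pi.add_apply, Pi.smul_apply, smul_eq_mul]
  ring

noncomputable def objP (N G l : ℕ) (α β γ δ : ℝ)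
    (Km : Matrix (Fin N) (Fin G) ℝ) (Kc : Matrix (Fin N) (Fin N) ℝ)
    (Yo : Matrix (Fin N) (Fin l) ℝ) (Yg : Matrix (Fin G) (Fin l) ℝ)
    (Fo : Matrix (Fin N) (Fin l) ℝ) (Fg : Matrix (Fin G) (Fin l) ℝ) : ℝ :=
  α / 2 * ∑ i, ∑ j, Km i j * esqnorm (Fo i - Fg j)
  + β / 2 * ∑ i, ∑ j, Kc i j * esqnorm (Fo i - Fo j)
  + γ * ∑ i, esqnorm (Fo i - Yo i)
  + δ * ∑ j, esqnorm (Fg j - Yg j)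

theorem objP_strictConvexOn_group_block (N G l : ℕ) (α β γ δ : ℝ)
    (hα : 0 ≤ α) (hβ : 0 ≤ β) (hγ : 0 ≤ γ) (hδ : 0 ≤ δ)
    (Km : Matrix (Fin N) (Fin G) ℝ) (Kc : Matrix (Fin N) (Fin N) ℝ)
    (hKm : ∀ i j, 0 ≤ Km i j) (hKc : ∀ i j, 0 ≤ Kc i j)
    (Yo : Matrix (Fin N) (Fin l) ℝ) (Yg : Matrix (Fin G) (Fin l) ℝ)
    (Fo : Matrix (Fin N) (Fin l) ℝ)
    (hden : ∀ j : Fin G, 0 < α * (∑ i, Km i j) + 2 * δ) :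
    StrictConvexOn ℝ (Set.univ : Set (Matrix (Fin G) (Fin l) ℝ))
      (fun Fg : Matrix (Fin G) (Fin l) ℝ => objP N G l α β γ δ Km Kc Yo Yg Fo Fg) := by
  refine ⟨convex_univ, ?_⟩
  intro x _ y _ hxy a b ha hb hab
  set D : Fin G → ℝ := fun j => esqnorm (x j - y j) with hD
  have e1 : ∀ (i : Fin N) (j : Fin G), esqnorm (Fo i - (a • x + b • y) j)
      = a * esqnorm (Fo i - x j) + b * esqnorm (Fo i - y j) - a * b * D j := by
    intro i j
    have h := esqnorm_key a b hab (Fo i) (x j) (y j)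
    exact h
  have e2 : ∀ j : Fin G, esqnorm ((a • x + b • y) j - Yg j)
      = a * esqnorm (x j - Yg j) + b * esqnorm (y j - Yg j) - a * b * D j := by
    intro j
    have h := esqnorm_key2 a b hab (Yg j) (x j) (y j)
    exact h
  have hsum1 : ∑ i, ∑ j, Km i j * esqnorm (Fo i - (a • x + b • y) j)
      = a * (∑ i, ∑ j, Km i j * esqnorm (Fo i - x j))
        + b * (∑ i, ∑ j, Km i j * esqnorm (Fo i - y j))
        - a * b * ∑ j, (∑ i, Km i j) * D j := by
    have hT : ∑ j, (∑ i, Km i j) * D j = ∑ i, ∑ j, Km i j * D j := by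
      calc ∑ j, (∑ i, Km i j) * D j = ∑ j, ∑ i, Km i j * D j :=
            Finset.sum_congr rfl fun j _ => Finset.sum_mul ..
        _ = ∑ i, ∑ j, Km i j * D j := Finset.sum_comm ..
    rw [hT, Finset.mul_sum, Finset.mul_sum, Finset.mul_sum, ← Finset.sum_add_distrib,
      ← Finset.sum_sub_distrib]
    refine Finset.sum_congr rfl fun i _ => ?_
    rw [Finset.mul_sum, Finset.mul_sum, Finset.mul_sum, ← Finset.sum_add_distrib,
      ← Finset.sum_sub_distrib]
    refine Finset.sum_congr rfl fun j _ => ?_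
    rw [e1 i j]; ring
  have hsum2 : ∑ j, esqnorm ((a • x + b • y) j - Yg j)
      = a * (∑ j, esqnorm (x j - Yg j)) + b * (∑ j, esqnorm (y j - Yg j))
        - a * b * ∑ j, D j := by
    rw [Finset.mul_sum, Finset.mul_sum, Finset.mul_sum, ← Finset.sum_add_distrib,
      ← Finset.sum_sub_distrib]
    exact Finset.sum_congr rfl fun j _ => by rw [e2 j]
  have hTpos : 0 < α / 2 * (∑ j, (∑ i, Km i j) * D j) + δ * ∑ j, D j := by
    have hrw : α / 2 * (∑ j, (∑ i, Km i j) * D j) + δ * ∑ j, D j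
        = ∑ j, (α / 2 * (∑ i, Km i j) + δ) * D j := by
      rw [Finset.mul_sum, Finset.mul_sum, ← Finset.sum_add_distrib]
      exact Finset.sum_congr rfl fun j _ => by ring
    rw [hrw]
    obtain ⟨j0, hj0⟩ : ∃ j, x j ≠ y j := by
      by_contra h; push_neg at h; exact hxy (funext h)
    refine Finset.sum_pos' (fun j _ => ?_) ⟨j0, Finset.mem_univ j0, ?_⟩
    · have hS : 0 ≤ ∑ i, Km i j := Finset.sum_nonneg fun i _ => hKm i j
      have : 0 ≤ α / 2 * (∑ i, Km i j) + δ := by positivity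
      exact mul_nonneg this (esqnorm_nonneg _)
    · have hDpos : 0 < D j0 := esqnorm_pos (sub_ne_zero_of_ne hj0)
      have hcoef : 0 < α / 2 * (∑ i, Km i j0) + δ := by have := hden j0; linarith
      exact mul_pos hcoef hDpos
  have hgap : 0 < a * b * (α / 2 * (∑ j, (∑ i, Km i j) * D j) + δ * ∑ j, D j) :=
    mul_pos (mul_pos ha hb) hTpos
  simp only [objP, smul_eq_mul]
  rw [hsum1, hsum2]
  have hb' : b = 1 - a := by linarith
  subst hb'
  nlinarith [hgap]
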